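/- arXiv:1809.08426 — 2 statements merged into one kernel-verified Lean document; each statement's English description precedes it below -/
import Mathlib

section
/- Let 0 < δ < 1, let t₀ < t be real numbers, and let x : ℝ → ℝ be continuously differentiable on [t₀, t]. Then the Caputo fractional derivative of x² is bounded by 2x(t) times the Caputo fractional derivative of x; explicitly, (1/Γ(1-δ)) ∫_{t₀}^{t} 2 x(τ) x'(τ) (t-τ)^{-δ} dτ ≤ 2 x(t) · (1/Γ(1-δ)) ∫_{t₀}^{t} x'(τ) (t-τ)^{-δ} dτ. -/
open intervalIntegral Real

/-- Lemma 1 (Aguila-Camacho et al.): for `0 < δ < 1` and a continuously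
differentiable real function `x` on `[t₀, t]`, the Caputo fractional derivative
of `x²` is bounded by `2 x(t)` times the Caputo fractional derivative of `x`. -/
theorem caputo_sq_le_two_mul_caputo
    (δ t₀ t : ℝ) (hδ0 : 0 < δ) (hδ1 : δ < 1) (ht : t₀ < t)
    (x x' : ℝ → ℝ)
    (hderiv : ∀ τ ∈ Set.Icc t₀ t, HasDerivWithinAt x (x' τ) (Set.Icc t₀ t) τ)
    (hcont : ContinuousOn x' (Set.Icc t₀ t)) :
    (1 / Real.Gamma (1 - δ)) * ∫ τ in t₀..t, 2 * x τ * x' τ * (t - τ) ^ (-δ)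
      ≤ 2 * x t * ((1 / Real.Gamma (1 - δ)) * ∫ τ in t₀..t, x' τ * (t - τ) ^ (-δ)) := by
  have hΓ : 0 < Real.Gamma (1 - δ) := Real.Gamma_pos_of_pos (by linarith)
  have htle : t₀ ≤ t := ht.le
  have huIcc : Set.uIcc t₀ t = Set.Icc t₀ t := Set.uIcc_of_le htle
  have hxcont : ContinuousOn x (Set.Icc t₀ t) := fun τ hτ => (hderiv τ hτ).continuousWithinAt
  -- integrability of the weight
  have hw_int : IntervalIntegrable (fun τ => (t - τ) ^ (-δ)) MeasureTheory.volume t₀ t := by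
    have h1 : IntervalIntegrable (fun s : ℝ => s ^ (-δ)) MeasureTheory.volume (t - t₀) (t - t) :=
      intervalIntegral.intervalIntegrable_rpow' (by linarith)
    simpa using h1.comp_sub_left t
  -- Lipschitz bound on x
  obtain ⟨M, hM⟩ := (isCompact_Icc : IsCompact (Set.Icc t₀ t)).exists_bound_of_continuousOn hcont
  have hM0 : 0 ≤ M := le_trans (norm_nonneg _) (hM t₀ (Set.left_mem_Icc.2 htle))
  have hlip : ∀ s ∈ Set.Icc t₀ t, |x t - x s| ≤ M * (t - s) := by
    intro s hs
    have h := (convex_Icc t₀ t).norm_image_sub_le_of_norm_hasDerivWithin_le hderiv hM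
      hs (Set.right_mem_Icc.2 htle)
    rw [Real.norm_eq_abs, Real.norm_eq_abs, abs_of_nonneg (sub_nonneg.2 hs.2)] at h
    exact h
  set φ : ℝ → ℝ := fun τ => 2 * (x t - x τ) * x' τ * (t - τ) ^ (-δ) with hφdef
  have hφ_int : IntervalIntegrable φ MeasureTheory.volume t₀ t := by
    apply hw_int.continuousOn_mul
    rw [huIcc]
    exact (continuousOn_const.mul (continuousOn_const.sub hxcont)).mul hcont
  -- the key positivity
  have key : 0 ≤ ∫ τ in t₀..t, φ τ := by
    have hFcont : ContinuousOn (fun s => ∫ τ in t₀..s, φ τ) (Set.Icc t₀ t) := by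
      rw [← huIcc]
      exact intervalIntegral.continuousOn_primitive_interval' hφ_int
        (by rw [huIcc]; exact Set.left_mem_Icc.2 htle)
    have hbound : ∀ s ∈ Set.Ico t₀ t, -(M ^ 2 * (t - s) ^ (2 - δ)) ≤ ∫ τ in t₀..s, φ τ := by
      intro s hs
      obtain ⟨h0s, hst⟩ := hs
      set G : ℝ → ℝ := fun τ => (x t - x τ) ^ 2 with hGdef
      set H : ℝ → ℝ := fun τ => G τ * (t - τ) ^ (-δ) with hHdef
      set w' : ℝ → ℝ := fun τ => δ * (t - τ) ^ (-δ - 1) with hw'def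
      have hsub : Set.Icc t₀ s ⊆ Set.Icc t₀ t := Set.Icc_subset_Icc_right hst.le
      have hpos : ∀ τ ∈ Set.Icc t₀ s, (0 : ℝ) < t - τ := fun τ hτ => by
        have := hτ.2; linarith
      have hGcont : ContinuousOn G (Set.Icc t₀ s) :=
        (continuousOn_const.sub (hxcont.mono hsub)).pow 2
      have hwcont : ContinuousOn (fun τ => (t - τ) ^ (-δ)) (Set.Icc t₀ s) :=
        (continuousOn_const.sub continuousOn_id).rpow_const
          (fun τ hτ => Or.inl (hpos τ hτ).ne')
      have hw'cont : ContinuousOn w' (Set.Icc t₀ s) :=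
        continuousOn_const.mul ((continuousOn_const.sub continuousOn_id).rpow_const
          (fun τ hτ => Or.inl (hpos τ hτ).ne'))
      have hHcont : ContinuousOn H (Set.Icc t₀ s) := hGcont.mul hwcont
      have hφcont : ContinuousOn φ (Set.Icc t₀ s) :=
        ((continuousOn_const.mul (continuousOn_const.sub (hxcont.mono hsub))).mul
          (hcont.mono hsub)).mul hwcont
      have hHderiv : ∀ τ ∈ Set.Ioo t₀ s, HasDerivAt H (-φ τ + G τ * w' τ) τ := by
        intro τ hτ
        have hτt : τ ∈ Set.Icc t₀ t := ⟨hτ.1.le, (hτ.2.trans hst).le⟩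
        have hmem : Set.Icc t₀ t ∈ nhds τ := Icc_mem_nhds hτ.1 (hτ.2.trans hst)
        have hx : HasDerivAt x (x' τ) τ := (hderiv τ hτt).hasDerivAt hmem
        have hne : t - τ ≠ 0 := by have := hτ.2; have : τ < t := lt_trans hτ.2 hst; linarith
        have hG : HasDerivAt G (2 * (x t - x τ) ^ 1 * (0 - x' τ)) τ :=
          ((hasDerivAt_const τ (x t)).sub hx).pow 2
        have h1 : HasDerivAt (fun τ : ℝ => t - τ) (-1) τ := by
          simpa using (hasDerivAt_id τ).const_sub t
        have hw : HasDerivAt (fun τ => (t - τ) ^ (-δ)) (-1 * (-δ) * (t - τ) ^ (-δ - 1)) τ :=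
          h1.rpow_const (p := -δ) (Or.inl hne)
        have := hG.mul hw
        refine this.congr_deriv ?_
        simp only [hφdef, hGdef, hw'def]
        ring
      have hψcont : ContinuousOn (fun τ => -φ τ + G τ * w' τ) (Set.Icc t₀ s) :=
        hφcont.neg.add (hGcont.mul hw'cont)
      have hψ_int : IntervalIntegrable (fun τ => -φ τ + G τ * w' τ) MeasureTheory.volume t₀ s :=
        hψcont.intervalIntegrable_of_Icc h0s
      have hFTC : ∫ τ in t₀..s, (-φ τ + G τ * w' τ) = H s - H t₀ :=
        intervalIntegral.integral_eq_sub_of_hasDerivAt_of_le h0s hHcont hHderiv hψ_int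
      have hφint_s : IntervalIntegrable φ MeasureTheory.volume t₀ s :=
        hφcont.intervalIntegrable_of_Icc h0s
      have hGw'int : IntervalIntegrable (fun τ => G τ * w' τ) MeasureTheory.volume t₀ s :=
        (hGcont.mul hw'cont).intervalIntegrable_of_Icc h0s
      have hsplit : ∫ τ in t₀..s, φ τ
          = (∫ τ in t₀..s, G τ * w' τ) - ∫ τ in t₀..s, (-φ τ + G τ * w' τ) := by
        rw [← intervalIntegral.integral_sub hGw'int hψ_int]
        apply intervalIntegral.integral_congr
        intro τ _
        ring
      have hGw'nonneg : 0 ≤ ∫ τ in t₀..s, G τ * w' τ := by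
        apply intervalIntegral.integral_nonneg h0s
        intro τ hτ
        exact mul_nonneg (sq_nonneg _)
          (mul_nonneg hδ0.le (Real.rpow_nonneg (hpos τ hτ).le _))
      have hHt₀ : 0 ≤ H t₀ :=
        mul_nonneg (sq_nonneg _) (Real.rpow_nonneg (by linarith) _)
      have hHs : H s ≤ M ^ 2 * (t - s) ^ (2 - δ) := by
        have h1 : |x t - x s| ≤ M * (t - s) := hlip s ⟨h0s, hst.le⟩
        have h2 : (x t - x s) ^ 2 ≤ (M * (t - s)) ^ 2 := by
          obtain ⟨ha, hb⟩ := abs_le.mp h1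
          nlinarith
        have hts : (0 : ℝ) < t - s := by linarith
        calc H s = (x t - x s) ^ 2 * (t - s) ^ (-δ) := rfl
          _ ≤ (M * (t - s)) ^ 2 * (t - s) ^ (-δ) :=
              mul_le_mul_of_nonneg_right h2 (Real.rpow_nonneg hts.le _)
          _ = M ^ 2 * ((t - s) ^ (2 : ℝ) * (t - s) ^ (-δ)) := by
              rw [Real.rpow_two]; ring
          _ = M ^ 2 * (t - s) ^ (2 - δ) := by
              rw [← Real.rpow_add hts, show (2 : ℝ) + -δ = 2 - δ by ring]
      rw [hFTC] at hsplit
      linarith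
    haveI hne : (nhdsWithin t (Set.Ico t₀ t)).NeBot := by
      apply mem_closure_iff_nhdsWithin_neBot.mp
      rw [closure_Ico ht.ne]
      exact Set.right_mem_Icc.2 htle
    have hF : Filter.Tendsto (fun s => ∫ τ in t₀..s, φ τ) (nhdsWithin t (Set.Ico t₀ t))
        (nhds (∫ τ in t₀..t, φ τ)) :=
      (hFcont t (Set.right_mem_Icc.2 htle)).mono_left
        (nhdsWithin_mono t Set.Ico_subset_Icc_self)
    have hg : Filter.Tendsto (fun s => -(M ^ 2 * (t - s) ^ (2 - δ)))
        (nhdsWithin t (Set.Ico t₀ t)) (nhds 0) := by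
      have h1 : Filter.Tendsto (fun s : ℝ => t - s) (nhds t) (nhds (t - t)) :=
        (continuous_const.sub continuous_id).tendsto t
      rw [sub_self] at h1
      have h2 : ContinuousAt (fun y : ℝ => y ^ (2 - δ)) 0 :=
        Real.continuousAt_rpow_const 0 (2 - δ) (Or.inr (by linarith))
      have h3 := h2.tendsto.comp h1
      rw [Real.zero_rpow (by linarith : (0:ℝ) < 2 - δ).ne'] at h3
      have h4 : Filter.Tendsto (fun s : ℝ => -(M ^ 2 * (t - s) ^ (2 - δ))) (nhds t)
          (nhds (-(M ^ 2 * 0))) := (h3.const_mul _).neg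
      simpa using h4.mono_left nhdsWithin_le_nhds
    exact le_of_tendsto_of_tendsto hg hF
      (Filter.eventually_of_mem self_mem_nhdsWithin hbound)
  -- assemble
  have hint1 : IntervalIntegrable (fun τ => 2 * x τ * x' τ * (t - τ) ^ (-δ))
      MeasureTheory.volume t₀ t := by
    apply hw_int.continuousOn_mul
    rw [huIcc]
    exact (continuousOn_const.mul hxcont).mul hcont
  have hint2 : IntervalIntegrable (fun τ => 2 * x t * x' τ * (t - τ) ^ (-δ))
      MeasureTheory.volume t₀ t := by
    apply hw_int.continuousOn_mul
    rw [huIcc]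
    exact (continuousOn_const.mul continuousOn_const).mul hcont
  have hdiff : (∫ τ in t₀..t, 2 * x t * x' τ * (t - τ) ^ (-δ))
      - (∫ τ in t₀..t, 2 * x τ * x' τ * (t - τ) ^ (-δ)) = ∫ τ in t₀..t, φ τ := by
    rw [← intervalIntegral.integral_sub hint2 hint1]
    apply intervalIntegral.integral_congr
    intro τ _
    simp only [hφdef]
    ring
  have hmain : (∫ τ in t₀..t, 2 * x τ * x' τ * (t - τ) ^ (-δ))
      ≤ ∫ τ in t₀..t, 2 * x t * x' τ * (t - τ) ^ (-δ) := by linarith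
  have hconst : ∫ τ in t₀..t, 2 * x t * x' τ * (t - τ) ^ (-δ)
      = 2 * x t * ∫ τ in t₀..t, x' τ * (t - τ) ^ (-δ) := by
    rw [← intervalIntegral.integral_const_mul]
    apply intervalIntegral.integral_congr
    intro τ _
    ring
  calc (1 / Real.Gamma (1 - δ)) * ∫ τ in t₀..t, 2 * x τ * x' τ * (t - τ) ^ (-δ)
      ≤ (1 / Real.Gamma (1 - δ)) * (2 * x t * ∫ τ in t₀..t, x' τ * (t - τ) ^ (-δ)) := by
        apply mul_le_mul_of_nonneg_left _ (by positivity)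
        rw [← hconst]
        exact hmain
    _ = 2 * x t * ((1 / Real.Gamma (1 - δ)) * ∫ τ in t₀..t, x' τ * (t - τ) ^ (-δ)) := by ring
end

section
/- Let n ≥ 1, let δ₁, …, δₙ ∈ (0,1), let t₀ < t be real numbers, and let u₁, …, uₙ : ℝ → ℝ be continuously differentiable on [t₀, t]. Then (1/2) Σ_{i=1}^{n} (1/Γ(1-δᵢ)) ∫_{t₀}^{t} (uᵢ²)'(τ) (t-τ)^{-δᵢ} dτ ≤ Σ_{i=1}^{n} uᵢ(t) · (1/Γ(1-δᵢ)) ∫_{t₀}^{t} uᵢ'(τ) (t-τ)^{-δᵢ} dτ; that is, (1/2) D^{δ̄}(UᵀU)(t) ≤ U(t)ᵀ D^{δ̄} U(t) where the multi-order Caputo derivative D^{δ̄} acts componentwise with order δᵢ on the i-th component. -/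
open intervalIntegral Real MeasureTheory Set Filter

lemma rpow_intInt {δ : ℝ} (hδ : -1 < -δ) (t₀ t : ℝ) :
    IntervalIntegrable (fun τ => (t - τ) ^ (-δ)) volume t₀ t := by
  simpa using (intervalIntegrable_rpow' (a := t - t₀) (b := 0) hδ).comp_sub_left t

lemma caputo_sq_core (δ t₀ t : ℝ) (hδ0 : 0 < δ) (hδ1 : δ < 1) (ht : t₀ < t)
    (u u' : ℝ → ℝ)
    (hderiv : ∀ τ ∈ Set.Icc t₀ t, HasDerivWithinAt u (u' τ) (Set.Icc t₀ t) τ)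
    (hcont : ContinuousOn u' (Set.Icc t₀ t)) :
    ∫ τ in t₀..t, (2 * u τ * u' τ) * (t - τ) ^ (-δ)
      ≤ ∫ τ in t₀..t, (2 * u t * u' τ) * (t - τ) ^ (-δ) := by
  have huIcc : Set.uIcc t₀ t = Set.Icc t₀ t := Set.uIcc_of_le ht.le
  have hV : IntervalIntegrable (fun τ => (t - τ) ^ (-δ)) volume t₀ t :=
    rpow_intInt (by linarith) t₀ t
  have hu_c : ContinuousOn u (Set.Icc t₀ t) := fun τ hτ => (hderiv τ hτ).continuousWithinAt
  have hI1 : IntervalIntegrable (fun τ => (2 * u τ * u' τ) * (t - τ) ^ (-δ)) volume t₀ t := by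
    apply hV.continuousOn_mul
    rw [huIcc]
    exact (continuousOn_const.mul hu_c).mul hcont
  have hI2 : IntervalIntegrable (fun τ => (2 * u t * u' τ) * (t - τ) ^ (-δ)) volume t₀ t := by
    apply hV.continuousOn_mul
    rw [huIcc]
    exact continuousOn_const.mul hcont
  rw [← sub_nonneg, ← intervalIntegral.integral_sub hI2 hI1]
  set w : ℝ → ℝ := fun τ => (2 * (u t - u τ) * u' τ) * (t - τ) ^ (-δ) with hw_def
  have hw : IntervalIntegrable w volume t₀ t := by
    apply hV.continuousOn_mul
    rw [huIcc]
    exact (continuousOn_const.mul (continuousOn_const.sub hu_c)).mul hcont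
  have hcongr : (∫ τ in t₀..t, (2 * u t * u' τ) * (t - τ) ^ (-δ)
        - (2 * u τ * u' τ) * (t - τ) ^ (-δ)) = ∫ τ in t₀..t, w τ := by
    apply intervalIntegral.integral_congr
    intro τ _
    simp only [hw_def]; ring
  rw [hcongr]
  set F : ℝ → ℝ := fun s => ∫ τ in t₀..s, w τ with hF_def
  have hFcont : ContinuousOn F (Set.Icc t₀ t) := by
    rw [← huIcc]
    exact intervalIntegral.continuousOn_primitive_interval
      (by rw [huIcc]
          exact (intervalIntegrable_iff_integrableOn_Icc_of_le ht.le).1 hw)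
  -- key pointwise lower bound via integration by parts on [t₀, s]
  have key : ∀ s ∈ Set.Ico t₀ t, -((u t - u s)^2 * (t - s) ^ (-δ)) ≤ F s := by
    rintro s ⟨hs0, hst⟩
    set h : ℝ → ℝ := fun τ => (u t - u τ)^2 * (t - τ) ^ (-δ) with hh
    set h' : ℝ → ℝ := fun τ =>
      (2 * (u t - u τ) * (-u' τ)) * (t - τ) ^ (-δ)
        + (u t - u τ)^2 * (δ * (t - τ) ^ (-δ - 1)) with hh'
    have hsub : Set.Icc t₀ s ⊆ Set.Icc t₀ t := Set.Icc_subset_Icc le_rfl hst.le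
    have hpos : ∀ τ ∈ Set.Icc t₀ s, (0:ℝ) < t - τ := fun τ hτ => by
      have := hτ.2; linarith
    have hVc : ContinuousOn (fun τ : ℝ => (t - τ) ^ (-δ)) (Set.Icc t₀ s) :=
      ContinuousOn.rpow_const ((continuous_const.sub continuous_id).continuousOn)
        (fun τ hτ => Or.inl (ne_of_gt (hpos τ hτ)))
    have hVc' : ContinuousOn (fun τ : ℝ => (t - τ) ^ (-δ - 1)) (Set.Icc t₀ s) :=
      ContinuousOn.rpow_const ((continuous_const.sub continuous_id).continuousOn)
        (fun τ hτ => Or.inl (ne_of_gt (hpos τ hτ)))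
    have hu_cs : ContinuousOn u (Set.Icc t₀ s) := hu_c.mono hsub
    have hu'_cs : ContinuousOn u' (Set.Icc t₀ s) := hcont.mono hsub
    have hconth : ContinuousOn h (Set.Icc t₀ s) :=
      ((continuousOn_const.sub hu_cs).pow 2).mul hVc
    have hderivh : ∀ x ∈ Set.Ioo t₀ s, HasDerivWithinAt h (h' x) (Set.Ioi x) x := by
      intro x hx
      have hxt : x < t := hx.2.trans hst
      have hxI : x ∈ Set.Icc t₀ t := ⟨hx.1.le, hxt.le⟩
      have hux : HasDerivAt u (u' x) x :=
        (hderiv x hxI).hasDerivAt (Icc_mem_nhds hx.1 hxt)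
      have h1 : HasDerivAt (fun τ => (u t - u τ)^2)
          ((2:ℕ) * (u t - u x)^(2-1) * (0 - u' x)) x :=
        ((hasDerivAt_const x (u t)).sub hux).pow 2
      have h2 : HasDerivAt (fun τ : ℝ => (t - τ) ^ (-δ))
          ((0 - 1) * (-δ) * (t - x) ^ (-δ - 1)) x := by
        exact ((hasDerivAt_const x t).sub (hasDerivAt_id x)).rpow_const
          (Or.inl (by intro hc; rw [Pi.sub_apply, sub_eq_zero] at hc; exact (ne_of_lt hxt) hc.symm))
      have hmul : HasDerivAt (fun τ => (u t - u τ)^2 * (t - τ) ^ (-δ)) _ x := h1.mul h2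
      have : HasDerivAt h (h' x) x := by
        convert hmul using 1
        show (2 * (u t - u x) * (-u' x)) * (t - x) ^ (-δ)
          + (u t - u x)^2 * (δ * (t - x) ^ (-δ - 1)) = _
        push_cast
        ring
      exact this.hasDerivWithinAt
    have hcont_h' : ContinuousOn h' (Set.Icc t₀ s) := by
      apply ContinuousOn.add
      · exact ((continuousOn_const.mul (continuousOn_const.sub hu_cs)).mul hu'_cs.neg).mul hVc
      · exact ((continuousOn_const.sub hu_cs).pow 2).mul (continuousOn_const.mul hVc')
    have h'int : IntervalIntegrable h' volume t₀ s := by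
      apply ContinuousOn.intervalIntegrable
      rwa [Set.uIcc_of_le hs0]
    have hftc : ∫ τ in t₀..s, h' τ = h s - h t₀ :=
      intervalIntegral.integral_eq_sub_of_hasDeriv_right_of_le hs0 hconth hderivh h'int
    -- rewrite F s
    set q : ℝ → ℝ := fun τ => (u t - u τ)^2 * (δ * (t - τ) ^ (-δ - 1)) with hq
    have qint : IntervalIntegrable q volume t₀ s := by
      apply ContinuousOn.intervalIntegrable
      rw [Set.uIcc_of_le hs0]
      exact ((continuousOn_const.sub hu_cs).pow 2).mul (continuousOn_const.mul hVc')
    have hFs : F s = ∫ τ in t₀..s, (q τ - h' τ) := by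
      apply intervalIntegral.integral_congr
      intro τ _
      simp only [hw_def, hh', hq]
      ring
    have hq_nonneg : 0 ≤ ∫ τ in t₀..s, q τ := by
      apply intervalIntegral.integral_nonneg hs0
      intro τ hτ
      have := hpos τ hτ
      positivity
    have hh0 : 0 ≤ h t₀ := by
      have : (0:ℝ) ≤ t - t₀ := by linarith
      simp only [hh]
      positivity
    rw [hFs, intervalIntegral.integral_sub qint h'int, hftc]
    simp only [hh] at hh0 ⊢
    linarith
  -- bound on u'
  obtain ⟨M, hM⟩ := (isCompact_Icc : IsCompact (Set.Icc t₀ t)).exists_bound_of_continuousOn hcont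
  have husub : ∀ s ∈ Set.Icc t₀ t, |u t - u s| ≤ M * (t - s) := by
    intro s hs
    have := (convex_Icc t₀ t).norm_image_sub_le_of_norm_hasDerivWithin_le
      hderiv (fun x hx => hM x hx) hs (Set.right_mem_Icc.2 ht.le)
    rw [Real.norm_eq_abs, Real.norm_eq_abs, abs_of_nonneg (sub_nonneg.2 hs.2)] at this
    exact this
  have htend : Tendsto (fun s => M^2 * (t - s)^((2:ℝ)-δ)) (nhdsWithin t (Set.Iio t)) (nhds 0) := by
    have h1 : Tendsto (fun s : ℝ => t - s) (nhdsWithin t (Set.Iio t)) (nhds 0) := by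
      have h0 : Tendsto (fun s : ℝ => t - s) (nhds t) (nhds (t - t)) :=
        (continuous_const.sub continuous_id).tendsto t
      rw [sub_self] at h0
      exact h0.mono_left nhdsWithin_le_nhds
    have h2 : Tendsto (fun x : ℝ => x ^ ((2:ℝ)-δ)) (nhds 0) (nhds 0) := by
      have hc := (Real.continuousAt_rpow_const 0 ((2:ℝ)-δ) (Or.inr (by linarith))).tendsto
      rwa [Real.zero_rpow (by intro hc0; linarith)] at hc
    have := (h2.comp h1).const_mul (M^2)
    simpa using this
  have hFt : Tendsto F (nhdsWithin t (Set.Iio t)) (nhds (F t)) := by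
    have h := (hFcont t (Set.right_mem_Icc.2 ht.le)).mono (Set.Ico_subset_Icc_self)
    rwa [ContinuousWithinAt, nhdsWithin_Ico_eq_nhdsLT ht] at h
  have hfin : Tendsto (fun s => F s + M^2 * (t - s)^((2:ℝ)-δ))
      (nhdsWithin t (Set.Iio t)) (nhds (F t + 0)) := hFt.add htend
  have hev : ∀ᶠ s in nhdsWithin t (Set.Iio t), 0 ≤ F s + M^2 * (t - s)^((2:ℝ)-δ) := by
    filter_upwards [Ioo_mem_nhdsLT_of_mem (Set.right_mem_Ioc.2 ht)] with s hs
    have hts : (0:ℝ) < t - s := by linarith [hs.2]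
    have hkey := key s ⟨hs.1.le, hs.2⟩
    have habs := husub s ⟨hs.1.le, hs.2.le⟩
    have hsq : (u t - u s)^2 ≤ (M * (t - s))^2 := by
      rw [← sq_abs (u t - u s)]
      exact pow_le_pow_left₀ (abs_nonneg _) habs 2
    have h2 : (u t - u s)^2 * (t - s)^(-δ) ≤ M^2 * (t - s)^((2:ℝ)-δ) := by
      calc (u t - u s)^2 * (t - s)^(-δ) ≤ (M * (t - s))^2 * (t - s)^(-δ) :=
            mul_le_mul_of_nonneg_right hsq (Real.rpow_nonneg hts.le _)
        _ = M^2 * (t - s)^((2:ℝ)-δ) := by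
            rw [mul_pow, sub_eq_add_neg (2:ℝ), Real.rpow_add hts, Real.rpow_two, mul_assoc]
    linarith
  have := ge_of_tendsto hfin hev
  simpa using this


/-- Lemma 5: for a vector of continuously differentiable functions `u` and a
multi-order `δ̄ = (δ₁, …, δₙ)`, one has
`(1/2) D^{δ̄}(UᵀU)(t) ≤ U(t)ᵀ D^{δ̄} U(t)`, where the multi-order Caputo
derivative acts componentwise with order `δᵢ` on the `i`-th component. -/
theorem caputo_vector_sq_le
    (n : ℕ) (hn : 1 ≤ n) (δ : Fin n → ℝ)
    (hδ0 : ∀ i, 0 < δ i) (hδ1 : ∀ i, δ i < 1)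
    (t₀ t : ℝ) (ht : t₀ < t)
    (u u' : Fin n → ℝ → ℝ)
    (hderiv : ∀ i, ∀ τ ∈ Set.Icc t₀ t, HasDerivWithinAt (u i) (u' i τ) (Set.Icc t₀ t) τ)
    (hcont : ∀ i, ContinuousOn (u' i) (Set.Icc t₀ t)) :
    (1 / 2) * ∑ i : Fin n, (1 / Real.Gamma (1 - δ i)) *
        ∫ τ in t₀..t, (2 * u i τ * u' i τ) * (t - τ) ^ (-(δ i))
      ≤ ∑ i : Fin n, u i t * ((1 / Real.Gamma (1 - δ i)) *
        ∫ τ in t₀..t, u' i τ * (t - τ) ^ (-(δ i))) := by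
  rw [Finset.mul_sum]
  apply Finset.sum_le_sum
  intro i _
  have hΓ : 0 < Real.Gamma (1 - δ i) := Real.Gamma_pos_of_pos (by linarith [hδ1 i])
  have hcore := caputo_sq_core (δ i) t₀ t (hδ0 i) (hδ1 i) ht (u i) (u' i)
    (hderiv i) (hcont i)
  have hconst : (∫ τ in t₀..t, (2 * u i t * u' i τ) * (t - τ) ^ (-(δ i)))
      = 2 * u i t * ∫ τ in t₀..t, u' i τ * (t - τ) ^ (-(δ i)) := by
    rw [← intervalIntegral.integral_const_mul]
    apply intervalIntegral.integral_congr
    intro τ _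
    ring
  rw [hconst] at hcore
  have h2 : (1 / Real.Gamma (1 - δ i)) *
        (∫ τ in t₀..t, (2 * u i τ * u' i τ) * (t - τ) ^ (-(δ i)))
      ≤ (1 / Real.Gamma (1 - δ i)) *
        (2 * u i t * ∫ τ in t₀..t, u' i τ * (t - τ) ^ (-(δ i))) :=
    mul_le_mul_of_nonneg_left hcore (by positivity)
  calc (1 / 2) * ((1 / Real.Gamma (1 - δ i)) *
        ∫ τ in t₀..t, (2 * u i τ * u' i τ) * (t - τ) ^ (-(δ i)))
      ≤ (1 / 2) * ((1 / Real.Gamma (1 - δ i)) *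
        (2 * u i t * ∫ τ in t₀..t, u' i τ * (t - τ) ^ (-(δ i)))) := by linarith
    _ = u i t * ((1 / Real.Gamma (1 - δ i)) *
        ∫ τ in t₀..t, u' i τ * (t - τ) ^ (-(δ i))) := by ring
end
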